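/- With $J$ and $J_{\min}$ as above, if a measurable $u:[0,T]\to\mathbb{R}$ with $|u(t)|\le 1$ a.e. satisfies $J(u)=J_{\min}$, then $|u(t)|\le U_1$ for almost every $t\in[0,T]$. -/

import Mathlib

open MeasureTheory

/-- if a measurable `u` with `|u| ≤ 1` a.e. attains `J(u) = J_min`, then
`|u(t)| ≤ U 0` for almost every `t ∈ [0,T]`. -/
theorem stmt_7 (T : ℝ) (hT : 0 < T) (n : ℕ) (U w : Fin (n + 1) → ℝ)
    (hU : StrictMono U) (hU0 : 0 ≤ U 0) (hUN : U (Fin.last n) = 1)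
    (hw : ∀ i, 0 < w i) (hws : ∑ i, w i = 1)
    (u : ℝ → ℝ) (hum : Measurable u)
    (hub : ∀ᵐ t ∂(volume.restrict (Set.Icc (0 : ℝ) T)), |u t| ≤ 1)
    (hJ : (∑ i, w i * ((∫ t in Set.Icc (0 : ℝ) T, |u t - U i|) +
                       (∫ t in Set.Icc (0 : ℝ) T, |u t + U i|)))
          = 2 * T * ∑ i, w i * U i) :
    ∀ᵐ t ∂(volume.restrict (Set.Icc (0 : ℝ) T)), |u t| ≤ U 0 := by
  set μ := volume.restrict (Set.Icc (0 : ℝ) T) with hμdef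
  have hIcc : volume (Set.Icc (0 : ℝ) T) < ⊤ := measure_Icc_lt_top
  have hvol : (volume (Set.Icc (0 : ℝ) T)).toReal = T := by
    rw [Real.volume_Icc, sub_zero, ENNReal.toReal_ofReal hT.le]
  -- integrability of |u - c|
  have hint : ∀ c : ℝ, Integrable (fun t => |u t - c|) μ := by
    intro c
    have hb : ∀ᵐ t ∂μ, ‖|u t - c|‖ ≤ 1 + |c| := by
      filter_upwards [hub] with t ht
      rw [Real.norm_eq_abs, abs_abs]
      calc |u t - c| ≤ |u t| + |c| := abs_sub _ _
        _ ≤ 1 + |c| := by linarith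
    exact Integrable.mono' (integrableOn_const hIcc.ne)
      ((hum.sub measurable_const).abs.aestronglyMeasurable) hb
  have hint' : ∀ c : ℝ, Integrable (fun t => |u t + c|) μ := by
    intro c
    simpa [sub_neg_eq_add] using hint (-c)
  -- per-index lower bound
  have key : ∀ i : Fin (n + 1), w i * (2 * T * U i) ≤
      w i * ((∫ t in Set.Icc (0 : ℝ) T, |u t - U i|) +
             (∫ t in Set.Icc (0 : ℝ) T, |u t + U i|)) := by
    intro i
    have hUi : 0 ≤ U i := le_trans hU0 (hU.monotone (Fin.zero_le i))
    have hpt : ∀ t, 2 * U i ≤ |u t - U i| + |u t + U i| := by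
      intro t
      have h1 : |(u t + U i) - (u t - U i)| ≤ |u t + U i| + |u t - U i| := abs_sub _ _
      have h2 : (u t + U i) - (u t - U i) = 2 * U i := by ring
      rw [h2] at h1
      calc 2 * U i ≤ |2 * U i| := le_abs_self _
        _ ≤ |u t + U i| + |u t - U i| := h1
        _ = |u t - U i| + |u t + U i| := by ring
    have hmono : (∫ t in Set.Icc (0 : ℝ) T, (2 * U i : ℝ)) ≤
        ∫ t in Set.Icc (0 : ℝ) T, (|u t - U i| + |u t + U i|) :=
      integral_mono (integrable_const _) ((hint (U i)).add (hint' (U i)))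
        (fun t => hpt t)
    rw [setIntegral_const, smul_eq_mul, measureReal_def, hvol,
      integral_add (hint (U i)) (hint' (U i))] at hmono
    have : 2 * T * U i ≤ (∫ t in Set.Icc (0 : ℝ) T, |u t - U i|) +
        (∫ t in Set.Icc (0 : ℝ) T, |u t + U i|) := by linarith
    exact mul_le_mul_of_nonneg_left this (hw i).le
  -- equality for each i, in particular i = 0
  have heq := (Finset.sum_eq_sum_iff_of_le (fun i _ => key i)).mp ?_ 0 (Finset.mem_univ 0)
  swap
  · rw [hJ, Finset.mul_sum]
    congr 1; ext i; ring
  have h0 : (∫ t in Set.Icc (0 : ℝ) T, |u t - U 0|) +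
      (∫ t in Set.Icc (0 : ℝ) T, |u t + U 0|) = 2 * T * U 0 := by
    have := heq.symm
    exact mul_left_cancel₀ (hw 0).ne' this
  -- nonnegative function with zero integral
  set f : ℝ → ℝ := fun t => |u t - U 0| + |u t + U 0| - 2 * U 0 with hf
  have hA : Integrable (fun t => |u t - U 0| + |u t + U 0|) μ :=
    (hint (U 0)).add (hint' (U 0))
  have hfint : Integrable f μ := hA.sub (integrable_const _)
  have hfnn : 0 ≤ᵐ[μ] f := Filter.Eventually.of_forall (fun t => by
    have h1 : |(u t + U 0) - (u t - U 0)| ≤ |u t + U 0| + |u t - U 0| := abs_sub _ _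
    have h2 : (u t + U 0) - (u t - U 0) = 2 * U 0 := by ring
    rw [h2] at h1
    have := le_abs_self (2 * U 0)
    simp only [hf, Pi.zero_apply]
    linarith)
  have hfz : ∫ t, f t ∂μ = 0 := by
    rw [hf]
    rw [integral_sub hA (integrable_const _),
      integral_add (hint (U 0)) (hint' (U 0)), integral_const, smul_eq_mul,
      hμdef, measureReal_def, Measure.restrict_apply_univ, hvol, h0]
    ring
  have hae : f =ᵐ[μ] 0 := (integral_eq_zero_iff_of_nonneg_ae hfnn hfint).mp hfz
  filter_upwards [hae] with t ht
  simp only [hf, Pi.zero_apply] at ht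
  have h1 : |(u t - U 0) + (u t + U 0)| ≤ |u t - U 0| + |u t + U 0| := abs_add_le _ _
  have h2 : (u t - U 0) + (u t + U 0) = 2 * u t := by ring
  rw [h2] at h1
  have h3 : 2 * |u t| = |2 * u t| := by
    rw [abs_mul]; norm_num
  linarith [h1, abs_nonneg (u t), h3.ge]
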